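/- Let 1 < p < ∞ and 0 < ε < p − 1. If a metric two-measure space X = (X,d,ν,μ) (with μ doubling) supports a (q, p−ε)-Poincaré inequality, then X supports a maximal (q,p)-Poincaré inequality, with constant depending only on the doubling constant of μ, p, ε, and the constant K_{q,p−ε} of the assumed Poincaré inequality. -/

import Mathlib

open MeasureTheory Metric Set ENNReal NNReal

noncomputable section

/-- `ν` is doubling with constant `c`. -/
def IsDoubling {X : Type*} [MetricSpace X] [MeasurableSpace X]
    (ν : Measure X) (c : ℝ) : Prop :=
  ∀ (x : X) (r : ℝ), 0 < r → ν (Metric.ball x (2 * r)) ≤ ENNReal.ofReal c * ν (Metric.ball x r)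

/-- `ν` is positive and finite on all balls. -/
def FinitePosOnBalls {X : Type*} [MetricSpace X] [MeasurableSpace X]
    (ν : Measure X) : Prop :=
  ∀ (x : X) (r : ℝ), 0 < r → 0 < ν (Metric.ball x r) ∧ ν (Metric.ball x r) < ⊤

/-- The `(q,p)`-balance condition with constant `C`:
`(diam B'/diam B) (ν B'/ν B)^{1/q} ≤ C^{1/p} (μ B'/μ B)^{1/p}` for all balls
`B`, `B' = B(x',r')` with `x' ∈ B` and `0 < r' ≤ diam B`. -/
def Balance {X : Type*} [MetricSpace X] [MeasurableSpace X]
    (ν μ : Measure X) (q p C : ℝ) : Prop :=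
  ∀ (x : X) (R : ℝ) (x' : X) (r' : ℝ), 0 < R → x' ∈ Metric.ball x R → 0 < r' →
    r' ≤ Metric.diam (Metric.ball x R) →
    (Metric.diam (Metric.ball x' r') / Metric.diam (Metric.ball x R)) *
        ((ν (Metric.ball x' r')).toReal / (ν (Metric.ball x R)).toReal) ^ (1 / q)
      ≤ C ^ (1 / p) *
        ((μ (Metric.ball x' r')).toReal / (μ (Metric.ball x R)).toReal) ^ (1 / p)

/-- The `p`-balance condition with constant `C`:
`(diam B'/diam B)^p (ν B'/ν B) ≤ C (μ B'/μ B)` for all balls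
`B`, `B' = B(x',r')` with `x' ∈ B` and `0 < r' ≤ diam B`. -/
def PBalance {X : Type*} [MetricSpace X] [MeasurableSpace X]
    (ν μ : Measure X) (p C : ℝ) : Prop :=
  ∀ (x : X) (R : ℝ) (x' : X) (r' : ℝ), 0 < R → x' ∈ Metric.ball x R → 0 < r' →
    r' ≤ Metric.diam (Metric.ball x R) →
    (Metric.diam (Metric.ball x' r') / Metric.diam (Metric.ball x R)) ^ p *
        ((ν (Metric.ball x' r')).toReal / (ν (Metric.ball x R)).toReal)
      ≤ C * ((μ (Metric.ball x' r')).toReal / (μ (Metric.ball x R)).toReal)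

/-- A (rectifiable, arc-length parametrized) curve in `X`: a `1`-Lipschitz map
from `[0, len]` to `X` with `len > 0`. -/
structure Curve (X : Type*) [MetricSpace X] where
  len : ℝ
  len_pos : 0 < len
  toFun : ℝ → X
  speed : ∀ s ∈ Set.Icc (0 : ℝ) len, ∀ t ∈ Set.Icc (0 : ℝ) len,
    dist (toFun s) (toFun t) ≤ |s - t|

/-- The curve integral `∫_γ g ds` for an arc-length parametrized curve. -/
def curveLint {X : Type*} [MetricSpace X] (γ : Curve X) (g : X → ℝ≥0∞) : ℝ≥0∞ :=
  ∫⁻ t in Set.Icc (0 : ℝ) γ.len, g (γ.toFun t)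

/-- `g` is a `p`-weak upper gradient of `u` (w.r.t. the measure `μ`): the upper
gradient inequality `|u(γ(0)) - u(γ(ℓ_γ))| ≤ ∫_γ g ds` holds for `p`-almost every
curve, i.e. there is a Borel `ρ ∈ L^p_loc(X; dμ)` such that `∫_γ ρ ds = ∞` for every
exceptional curve. -/
def IsWeakUpperGradient {X : Type*} [MetricSpace X] [MeasurableSpace X]
    (μ : Measure X) (p : ℝ) (u : X → ℝ) (g : X → ℝ≥0∞) : Prop :=
  Measurable g ∧ ∃ ρ : X → ℝ≥0∞, Measurable ρ ∧
    (∀ (x : X) (r : ℝ), 0 < r → ∫⁻ y in Metric.ball x r, ρ y ^ p ∂μ < ⊤) ∧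
    ∀ γ : Curve X, curveLint γ ρ ≠ ⊤ →
      ENNReal.ofReal |u (γ.toFun 0) - u (γ.toFun γ.len)| ≤ curveLint γ g

/-- The normalized `L^q(ν)`-oscillation of `u` on the ball `B(z,r)`:
`((diam B)^{-q} ⨍_B |u - u_{B;ν}|^q dν)^{1/q}`, as an extended real. -/
def ballOsc {X : Type*} [MetricSpace X] [MeasurableSpace X]
    (ν : Measure X) (q : ℝ) (u : X → ℝ) (z : X) (r : ℝ) : ℝ≥0∞ :=
  ((∫⁻ y in Metric.ball z r,
      ENNReal.ofReal |u y - ⨍ w in Metric.ball z r, u w ∂ν| ^ q ∂ν) /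
    (ENNReal.ofReal (Metric.diam (Metric.ball z r) ^ q) * ν (Metric.ball z r))) ^ (1 / q)

/-- The sharp maximal function `M^{ν,q}_𝓑 u` associated with a family `𝓑` of balls
(given by center-radius pairs): the sup of normalized oscillations over balls of the
family containing the point. -/
def sharpMax {X : Type*} [MetricSpace X] [MeasurableSpace X]
    (ν : Measure X) (q : ℝ) (𝓑 : Set (X × ℝ)) (u : X → ℝ) (x : X) : ℝ≥0∞ :=
  ⨆ b ∈ 𝓑, ⨆ _ : x ∈ Metric.ball b.1 b.2, ballOsc ν q u b.1 b.2

/-- The `(q,p)`-Poincaré inequality with constant `K`. -/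
def PoincareIneq {X : Type*} [MetricSpace X] [MeasurableSpace X]
    (ν μ : Measure X) (q p K : ℝ) : Prop :=
  ∀ (x : X) (r : ℝ), 0 < r →
    ∀ u : X → ℝ, (∃ L : ℝ≥0, LipschitzWith L u) →
    ∀ g : X → ℝ≥0∞, IsWeakUpperGradient μ p u g →
    ((ν (Metric.ball x r))⁻¹ *
        ∫⁻ y in Metric.ball x r,
          ENNReal.ofReal |u y - ⨍ z in Metric.ball x r, u z ∂ν| ^ q ∂ν) ^ (1 / q)
      ≤ ENNReal.ofReal (K ^ (1 / p) * Metric.diam (Metric.ball x r)) *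
        ((μ (Metric.ball x r))⁻¹ * ∫⁻ y in Metric.ball x r, g y ^ p ∂μ) ^ (1 / p)

/-- The maximal `(q,p)`-Poincaré inequality with constant `C`. -/
def MaxPoincareIneq {X : Type*} [MetricSpace X] [MeasurableSpace X]
    (ν μ : Measure X) (q p C : ℝ) : Prop :=
  ∀ (x₀ : X) (r₀ : ℝ), 0 < r₀ →
    ∀ u : X → ℝ, (∃ L : ℝ≥0, LipschitzWith L u) →
    ∀ g : X → ℝ≥0∞, IsWeakUpperGradient μ p u g →
    ∫⁻ x in Metric.ball x₀ r₀,
        (sharpMax ν q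
          {b : X × ℝ | 0 < b.2 ∧ Metric.ball b.1 (2 * b.2) ⊆ Metric.ball x₀ r₀}
          u x) ^ p ∂μ
      ≤ ENNReal.ofReal C * ∫⁻ x in Metric.ball x₀ r₀, g x ^ p ∂μ


lemma lintIoo {r : ℝ} (hr : -1 < r) {c : ℝ} (hc : 0 ≤ c) {A : ℝ} (hA : 0 ≤ A) :
    ∫⁻ t in Set.Ioo (0:ℝ) A, ENNReal.ofReal (c * t ^ r) =
      ENNReal.ofReal (c / (r+1) * A ^ (r+1)) := by
  have hr1 : (0:ℝ) < r + 1 := by linarith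
  have hint : IntervalIntegrable (fun t : ℝ => c * t ^ r) volume 0 A :=
    (intervalIntegral.intervalIntegrable_rpow' hr).const_mul c
  have hioc : IntegrableOn (fun t : ℝ => c * t ^ r) (Set.Ioc 0 A) volume :=
    (intervalIntegrable_iff_integrableOn_Ioc_of_le hA).1 hint
  have hioo : IntegrableOn (fun t : ℝ => c * t ^ r) (Set.Ioo 0 A) volume :=
    hioc.mono_set Set.Ioo_subset_Ioc_self
  have hnn : 0 ≤ᵐ[volume.restrict (Set.Ioo 0 A)] fun t : ℝ => c * t ^ r := by
    filter_upwards [self_mem_ae_restrict (measurableSet_Ioo :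
      MeasurableSet (Set.Ioo (0:ℝ) A))] with t ht
    exact mul_nonneg hc (Real.rpow_nonneg ht.1.le r)
  rw [← ofReal_integral_eq_lintegral_ofReal hioo hnn]
  congr 1
  rw [← integral_Ioc_eq_integral_Ioo, ← intervalIntegral.integral_of_le hA,
    intervalIntegral.integral_const_mul, integral_rpow (Or.inl hr)]
  rw [Real.zero_rpow hr1.ne']
  ring

lemma lintIoiTop {r : ℝ} (hr : -1 < r) {c : ℝ} (hc : 0 < c) :
    ∫⁻ t in Set.Ioi (0:ℝ), ENNReal.ofReal (c * t ^ r) = ∞ := by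
  have hr1 : (0:ℝ) < r + 1 := by linarith
  have hc' : 0 < c / (r+1) := div_pos hc hr1
  apply ENNReal.eq_top_of_forall_nnreal_le
  intro x
  set B : ℝ := max ((x:ℝ) * (r+1) / c) 0 with hB
  have hB0 : 0 ≤ B := le_max_right _ _
  set A : ℝ := B ^ (r+1)⁻¹ with hAdef
  have hA0 : 0 ≤ A := Real.rpow_nonneg hB0 _
  have hApow : A ^ (r+1) = B := Real.rpow_inv_rpow hB0 hr1.ne'
  have hxle : (x:ℝ) ≤ c / (r+1) * A ^ (r+1) := by
    rw [hApow]
    calc (x:ℝ) = c / (r+1) * ((x:ℝ) * (r+1) / c) := by field_simp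
    _ ≤ c / (r+1) * B := by
        exact mul_le_mul_of_nonneg_left (le_max_left _ _) hc'.le
  calc (x : ℝ≥0∞) = ENNReal.ofReal (x:ℝ) := (ENNReal.ofReal_coe_nnreal (p := x)).symm
  _ ≤ ENNReal.ofReal (c / (r+1) * A ^ (r+1)) := ENNReal.ofReal_le_ofReal hxle
  _ = ∫⁻ t in Set.Ioo (0:ℝ) A, ENNReal.ofReal (c * t ^ r) := (lintIoo hr hc.le hA0).symm
  _ ≤ ∫⁻ t in Set.Ioi (0:ℝ), ENNReal.ofReal (c * t ^ r) :=
      lintegral_mono_set (fun t ht => ht.1)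

/-- Key computation: `∫_{0<t, ofReal t < a} c t^r dt = (c/(r+1)) a^(r+1)`. -/
lemma lintTrunc {r : ℝ} (hr : -1 < r) {c : ℝ} (hc : 0 ≤ c) (a : ℝ≥0∞) :
    ∫⁻ t in Set.Ioi (0:ℝ),
        {t : ℝ | ENNReal.ofReal t < a}.indicator (fun t => ENNReal.ofReal (c * t ^ r)) t
      = ENNReal.ofReal (c / (r+1)) * a ^ (r+1) := by
  have hr1 : (0:ℝ) < r + 1 := by linarith
  rcases eq_or_lt_of_le hc with rfl | hc
  · simp
  rcases eq_or_ne a 0 with rfl | ha0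
  · have : {t : ℝ | ENNReal.ofReal t < 0} = (∅ : Set ℝ) := by
      ext t; simp
    rw [this]
    simp [ENNReal.zero_rpow_of_pos hr1]
  rcases eq_or_ne a ∞ with rfl | hatop
  · have : {t : ℝ | ENNReal.ofReal t < ∞} = Set.univ := by
      ext t; simp [ENNReal.ofReal_lt_top]
    rw [this]
    simp only [Set.indicator_univ]
    rw [lintIoiTop hr hc, ENNReal.top_rpow_of_pos hr1]
    rw [ENNReal.mul_top (by positivity)]
  · have hS : {t : ℝ | ENNReal.ofReal t < a} = Set.Iio a.toReal := by
      ext t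
      simp only [Set.mem_setOf_eq, Set.mem_Iio]
      rcases le_or_gt t 0 with ht | ht
      · have h1 : ENNReal.ofReal t = 0 := ENNReal.ofReal_eq_zero.2 ht
        have h2 : 0 < a.toReal := ENNReal.toReal_pos ha0 hatop
        constructor
        · intro _; linarith
        · intro _; rw [h1]; exact pos_iff_ne_zero.2 ha0
      · rw [ENNReal.ofReal_lt_iff_lt_toReal ht.le hatop]
    rw [hS, lintegral_indicator measurableSet_Iio,
      Measure.restrict_restrict measurableSet_Iio]
    have : Set.Iio a.toReal ∩ Set.Ioi 0 = Set.Ioo 0 a.toReal := by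
      ext t; simp [Set.mem_Ioo, and_comm]
    rw [this, lintIoo hr hc.le ENNReal.toReal_nonneg, ENNReal.ofReal_mul (by positivity),
      ← ENNReal.ofReal_rpow_of_nonneg ENNReal.toReal_nonneg hr1.le, ENNReal.ofReal_toReal hatop]

lemma layercake {α : Type*} [MeasurableSpace α] (μ : Measure α) [SFinite μ]
    {F : α → ℝ≥0∞} (hF : Measurable F) {s : ℝ} (hs : 0 < s) :
    ∫⁻ x, F x ^ s ∂μ =
      ∫⁻ t in Set.Ioi (0:ℝ),
        ENNReal.ofReal (s * t ^ (s-1)) * μ {x | ENNReal.ofReal t < F x} := by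
  have hs1 : s - 1 + 1 = s := by ring
  have hpt : ∀ x, F x ^ s = ∫⁻ t in Set.Ioi (0:ℝ),
      ({t : ℝ | ENNReal.ofReal t < F x}.indicator
        (fun t => ENNReal.ofReal (s * t ^ (s-1)))) t := by
    intro x
    rw [lintTrunc (by linarith : (-1:ℝ) < s - 1) hs.le (F x), hs1, div_self hs.ne',
      ENNReal.ofReal_one, one_mul]
  have hmeas : AEMeasurable (Function.uncurry fun (x : α) (t : ℝ) =>
      ({t : ℝ | ENNReal.ofReal t < F x}.indicator
        (fun t => ENNReal.ofReal (s * t ^ (s-1)))) t)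
      (μ.prod (volume.restrict (Set.Ioi (0:ℝ)))) := by
    have : (Function.uncurry fun (x : α) (t : ℝ) =>
        ({t : ℝ | ENNReal.ofReal t < F x}.indicator
          (fun t => ENNReal.ofReal (s * t ^ (s-1)))) t) =
        fun p : α × ℝ => if ENNReal.ofReal p.2 < F p.1
          then ENNReal.ofReal (s * p.2 ^ (s-1)) else 0 := by
      ext p
      simp [Function.uncurry, Set.indicator_apply]
    rw [this]
    exact (Measurable.ite
      (measurableSet_lt measurable_snd.ennreal_ofReal (hF.comp measurable_fst))
      (((measurable_snd.pow_const (s-1)).const_mul s).ennreal_ofReal)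
      measurable_const).aemeasurable
  calc ∫⁻ x, F x ^ s ∂μ
      = ∫⁻ x, (∫⁻ t in Set.Ioi (0:ℝ),
          ({t : ℝ | ENNReal.ofReal t < F x}.indicator
            (fun t => ENNReal.ofReal (s * t ^ (s-1)))) t) ∂μ := lintegral_congr hpt
    _ = ∫⁻ t in Set.Ioi (0:ℝ), (∫⁻ x,
          ({t : ℝ | ENNReal.ofReal t < F x}.indicator
            (fun t => ENNReal.ofReal (s * t ^ (s-1)))) t ∂μ) :=
        lintegral_lintegral_swap hmeas
    _ = ∫⁻ t in Set.Ioi (0:ℝ),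
          ENNReal.ofReal (s * t ^ (s-1)) * μ {x | ENNReal.ofReal t < F x} := by
        apply lintegral_congr
        intro t
        have hrw : ∀ x : α, ({t : ℝ | ENNReal.ofReal t < F x}.indicator
            (fun t => ENNReal.ofReal (s * t ^ (s-1)))) t =
            ({x : α | ENNReal.ofReal t < F x}.indicator
              (fun _ => ENNReal.ofReal (s * t ^ (s-1)))) x := by
          intro x
          simp [Set.indicator_apply]
        simp_rw [hrw]
        rw [lintegral_indicator (measurableSet_lt measurable_const hF), setLIntegral_const]

/-- Restricted noncentered maximal-type operator. -/
def rT {X : Type*} [MetricSpace X] [MeasurableSpace X] (μ : Measure X) (𝓑 : Set (X × ℝ))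
    (h : X → ℝ≥0∞) (x : X) : ℝ≥0∞ :=
  ⨆ b ∈ 𝓑, ⨆ _ : x ∈ Metric.ball b.1 b.2,
    (μ (Metric.ball b.1 b.2))⁻¹ * ∫⁻ y in Metric.ball b.1 b.2, h y ∂μ

lemma rT_lt_iff {X : Type*} [MetricSpace X] [MeasurableSpace X] {μ : Measure X}
    {𝓑 : Set (X × ℝ)} {h : X → ℝ≥0∞} {x : X} {a : ℝ≥0∞} :
    a < rT μ 𝓑 h x ↔ ∃ b ∈ 𝓑, x ∈ Metric.ball b.1 b.2 ∧
      a < (μ (Metric.ball b.1 b.2))⁻¹ * ∫⁻ y in Metric.ball b.1 b.2, h y ∂μ := by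
  simp only [rT, lt_iSup_iff]
  aesop

lemma rT_le {X : Type*} [MetricSpace X] [MeasurableSpace X] {μ : Measure X}
    {𝓑 : Set (X × ℝ)} {h : X → ℝ≥0∞} {x : X} {a : ℝ≥0∞}
    (H : ∀ b ∈ 𝓑, x ∈ Metric.ball b.1 b.2 →
      (μ (Metric.ball b.1 b.2))⁻¹ * ∫⁻ y in Metric.ball b.1 b.2, h y ∂μ ≤ a) :
    rT μ 𝓑 h x ≤ a := by
  apply iSup₂_le
  intro b hb
  exact iSup_le fun hx => H b hb hx

lemma le_rT {X : Type*} [MetricSpace X] [MeasurableSpace X] {μ : Measure X}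
    {𝓑 : Set (X × ℝ)} {h : X → ℝ≥0∞} {x : X} {b : X × ℝ} (hb : b ∈ 𝓑)
    (hx : x ∈ Metric.ball b.1 b.2) :
    (μ (Metric.ball b.1 b.2))⁻¹ * ∫⁻ y in Metric.ball b.1 b.2, h y ∂μ ≤ rT μ 𝓑 h x := by
  have h1 := le_iSup₂ (f := fun (b : X × ℝ) (_ : b ∈ 𝓑) => ⨆ _ : x ∈ Metric.ball b.1 b.2,
    (μ (Metric.ball b.1 b.2))⁻¹ * ∫⁻ y in Metric.ball b.1 b.2, h y ∂μ) b hb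
  exact le_trans (le_iSup (fun _ : x ∈ Metric.ball b.1 b.2 =>
    (μ (Metric.ball b.1 b.2))⁻¹ * ∫⁻ y in Metric.ball b.1 b.2, h y ∂μ) hx) h1

lemma rT_measurable {X : Type*} [MetricSpace X] [MeasurableSpace X] [BorelSpace X]
    (μ : Measure X) (𝓑 : Set (X × ℝ)) (h : X → ℝ≥0∞) :
    Measurable (rT μ 𝓑 h) := by
  apply measurable_of_Ioi
  intro a
  have : rT μ 𝓑 h ⁻¹' Set.Ioi a =
      ⋃ b ∈ {b ∈ 𝓑 | a < (μ (Metric.ball b.1 b.2))⁻¹ *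
        ∫⁻ y in Metric.ball b.1 b.2, h y ∂μ}, Metric.ball b.1 b.2 := by
    ext x
    simp only [Set.mem_preimage, Set.mem_Ioi, Set.mem_iUnion, Set.mem_setOf_eq, exists_prop]
    rw [rT_lt_iff]
    tauto
  rw [this]
  exact (isOpen_biUnion fun b _ => isOpen_ball).measurableSet

lemma weakType {X : Type*} [MetricSpace X] [MeasurableSpace X] [BorelSpace X]
    {μ : Measure X} {cμ : ℝ} (hfin : FinitePosOnBalls μ) (hdo : IsDoubling μ cμ)
    (x₀ : X) (r₀ : ℝ) (h : X → ℝ≥0∞)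
    {a : ℝ≥0∞} (ha0 : a ≠ 0) (hatop : a ≠ ∞) :
    μ {x | a < rT μ {b : X × ℝ | 0 < b.2 ∧ Metric.ball b.1 (2 * b.2) ⊆ Metric.ball x₀ r₀} h x}
      ≤ ENNReal.ofReal cμ ^ 3 * a⁻¹ * ∫⁻ y, h y ∂μ := by
  set B₀ := Metric.ball x₀ r₀ with hB₀
  set 𝓑 := {b : X × ℝ | 0 < b.2 ∧ Metric.ball b.1 (2 * b.2) ⊆ B₀} with h𝓑
  set E := {x | a < rT μ 𝓑 h x} with hE
  rcases le_or_gt r₀ 0 with hr₀ | hr₀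
  · -- degenerate case: `B₀ = ∅`, so `𝓑 = ∅` and `E = ∅`.
    have h𝓑e : 𝓑 = ∅ := by
      ext b
      simp only [h𝓑, Set.mem_setOf_eq, Set.mem_empty_iff_false, iff_false, not_and]
      intro hb hsub
      have : b.1 ∈ Metric.ball x₀ r₀ := hsub (Metric.mem_ball_self (by linarith))
      rw [Metric.ball_eq_empty.2 hr₀] at this
      exact this
    have : E = ∅ := by
      ext x
      simp [hE, rT, h𝓑e]
    rw [this]
    simp
  -- main case
  have hμB₀ := hfin x₀ r₀ hr₀
  -- tripled doubling estimate
  have hcube : ∀ (z : X) (r : ℝ), 0 < r →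
      μ (Metric.closedBall z (4 * r)) ≤ ENNReal.ofReal cμ ^ 3 * μ (Metric.ball z r) := by
    intro z r hr
    have h1 := hdo z r hr
    have h2 := hdo z (2 * r) (by positivity)
    have h3 := hdo z (4 * r) (by positivity)
    have e2 : (2:ℝ) * (2 * r) = 4 * r := by ring
    have e3 : (2:ℝ) * (4 * r) = 8 * r := by ring
    rw [e2] at h2
    rw [e3] at h3
    calc μ (Metric.closedBall z (4 * r)) ≤ μ (Metric.ball z (8 * r)) :=
          measure_mono (Metric.closedBall_subset_ball (by linarith))
      _ ≤ ENNReal.ofReal cμ * μ (Metric.ball z (4 * r)) := h3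
      _ ≤ ENNReal.ofReal cμ * (ENNReal.ofReal cμ * μ (Metric.ball z (2 * r))) :=
          mul_le_mul_right h2 _
      _ ≤ ENNReal.ofReal cμ * (ENNReal.ofReal cμ * (ENNReal.ofReal cμ * μ (Metric.ball z r))) := by
          exact mul_le_mul_right (mul_le_mul_right h1 _) _
      _ = ENNReal.ofReal cμ ^ 3 * μ (Metric.ball z r) := by
          rw [pow_succ, pow_succ, pow_one, mul_assoc, mul_assoc]
  -- the Vitali family
  set t : Set (X × ℝ) := {b | 0 < b.2 ∧ b.2 ≤ 2 * r₀ ∧ Metric.ball b.1 b.2 ⊆ B₀ ∧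
    a * μ (Metric.ball b.1 b.2) < ∫⁻ y in Metric.ball b.1 b.2, h y ∂μ} with ht
  have hcover : E ⊆ ⋃ b ∈ t, Metric.ball b.1 b.2 := by
    intro x hx
    obtain ⟨b, hb𝓑, hxb, hlt⟩ := rT_lt_iff.1 hx
    obtain ⟨z, r⟩ := b
    simp only at hxb hlt
    have hr : 0 < r := hb𝓑.1
    have hsub : Metric.ball z r ⊆ B₀ := (Metric.ball_subset_ball (by linarith)).trans hb𝓑.2
    have hzB₀ : z ∈ B₀ := hb𝓑.2 (Metric.mem_ball_self (by positivity))
    have hballeq : Metric.ball z r = Metric.ball z (min r (2 * r₀)) := by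
      rcases le_or_gt r (2 * r₀) with hle | hlt'
      · rw [min_eq_left hle]
      · rw [min_eq_right hlt'.le]
        apply Set.Subset.antisymm
        · intro y hy
          have hyB₀ : y ∈ B₀ := hsub hy
          rw [Metric.mem_ball] at hyB₀ hzB₀ ⊢
          calc dist y z ≤ dist y x₀ + dist x₀ z := dist_triangle _ _ _
            _ < r₀ + r₀ := by
                rw [dist_comm x₀ z]; exact add_lt_add hyB₀ hzB₀
            _ = 2 * r₀ := by ring
        · exact Metric.ball_subset_ball (by linarith)
    have hμB := hfin z r hr
    have hmul : a * μ (Metric.ball z r) < ∫⁻ y in Metric.ball z r, h y ∂μ := by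
      have h1 := (ENNReal.mul_lt_mul_iff_left hμB.1.ne' hμB.2.ne).2 hlt
      calc a * μ (Metric.ball z r)
          < ((μ (Metric.ball z r))⁻¹ * ∫⁻ y in Metric.ball z r, h y ∂μ) *
            μ (Metric.ball z r) := h1
        _ = ∫⁻ y in Metric.ball z r, h y ∂μ := by
            rw [mul_comm, ← mul_assoc, ENNReal.mul_inv_cancel hμB.1.ne' hμB.2.ne, one_mul]
    have hbt : ((z, min r (2 * r₀)) : X × ℝ) ∈ t := by
      refine ⟨lt_min hr (by positivity), min_le_right _ _, ?_, ?_⟩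
      · rw [← hballeq]; exact hsub
      · rw [← hballeq]; exact hmul
    exact Set.mem_biUnion hbt (by rw [← hballeq]; exact hxb)
  obtain ⟨u, hut, hdisj, hcov⟩ :=
    Vitali.exists_disjoint_subfamily_covering_enlargement_closedBall t Prod.fst Prod.snd
      (2 * r₀) (fun b hb => hb.2.1) 4 (by norm_num)
  have hAsdisj : Pairwise (Function.onFun Disjoint fun c : ↥u => Metric.ball c.val.1 c.val.2) := by
    intro c d hcd
    have := hdisj c.2 d.2 (Subtype.coe_injective.ne hcd)
    exact this.mono Metric.ball_subset_closedBall Metric.ball_subset_closedBall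
  have hucnt : u.Countable := by
    have hmble : ∀ c : ↥u, MeasurableSet (Metric.ball c.val.1 c.val.2) :=
      fun c => measurableSet_ball
    have hfinU : μ (⋃ c : ↥u, Metric.ball c.val.1 c.val.2) ≠ ∞ := by
      refine ne_top_of_le_ne_top hμB₀.2.ne (measure_mono ?_)
      exact Set.iUnion_subset fun c => (hut c.2).2.2.1
    have hcnt := MeasureTheory.Measure.countable_meas_pos_of_disjoint_of_meas_iUnion_ne_top
      μ hmble hAsdisj hfinU
    have huniv : {c : ↥u | 0 < μ (Metric.ball c.val.1 c.val.2)} = Set.univ := by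
      ext c
      simp only [Set.mem_setOf_eq, Set.mem_univ, iff_true]
      exact (hfin c.val.1 c.val.2 (hut c.2).1).1
    rw [huniv] at hcnt
    rw [← Set.countable_coe_iff]
    exact Set.countable_univ_iff.1 hcnt
  haveI : Countable ↥u := hucnt.to_subtype
  calc μ E ≤ μ (⋃ c ∈ u, Metric.closedBall c.1 (4 * c.2)) := by
        apply measure_mono
        intro x hx
        obtain ⟨b, hbt, hxb⟩ := Set.mem_iUnion₂.1 (hcover hx)
        obtain ⟨c, hcu, hsubc⟩ := hcov b hbt
        exact Set.mem_biUnion hcu (hsubc (Metric.ball_subset_closedBall hxb))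
    _ ≤ ∑' c : ↥u, μ (Metric.closedBall c.val.1 (4 * c.val.2)) :=
        measure_biUnion_le μ hucnt _
    _ ≤ ∑' c : ↥u, ENNReal.ofReal cμ ^ 3 *
          (a⁻¹ * ∫⁻ y in Metric.ball c.val.1 c.val.2, h y ∂μ) := by
        apply ENNReal.tsum_le_tsum
        intro c
        have hct := hut c.2
        refine (hcube c.val.1 c.val.2 hct.1).trans (mul_le_mul_right ?_ _)
        have : μ (Metric.ball c.val.1 c.val.2) =
            a⁻¹ * (a * μ (Metric.ball c.val.1 c.val.2)) := by
          rw [← mul_assoc, ENNReal.inv_mul_cancel ha0 hatop, one_mul]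
        rw [this]
        exact mul_le_mul_right hct.2.2.2.le _
    _ = ENNReal.ofReal cμ ^ 3 * a⁻¹ *
          ∑' c : ↥u, ∫⁻ y in Metric.ball c.val.1 c.val.2, h y ∂μ := by
        simp_rw [← mul_assoc]
        rw [ENNReal.tsum_mul_left]
    _ = ENNReal.ofReal cμ ^ 3 * a⁻¹ *
          ∫⁻ y in ⋃ c : ↥u, Metric.ball c.val.1 c.val.2, h y ∂μ := by
        rw [lintegral_iUnion (fun c => measurableSet_ball) hAsdisj]
    _ ≤ ENNReal.ofReal cμ ^ 3 * a⁻¹ * ∫⁻ y, h y ∂μ :=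
        mul_le_mul_right (setLIntegral_le_lintegral _ _) _

/-- for `1 < p` and `0 < ε < p - 1`, a `(q, p-ε)`-Poincaré inequality
implies a maximal `(q,p)`-Poincaré inequality, with constant depending only on the
doubling constant of `μ`, `p`, `ε`, and the constant `K` of the assumed Poincaré
inequality. -/
theorem stmt13 (q p ε cμ K : ℝ) (hq : 1 ≤ q) (hp : 1 < p)
    (hε : 0 < ε) (hεp : ε < p - 1) (hcμ : 1 < cμ) (hK : 0 < K) :
    ∃ C : ℝ, 0 < C ∧ ∀ (X : Type) [MetricSpace X] [MeasurableSpace X] [BorelSpace X]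
      (ν μ : Measure X),
      FinitePosOnBalls ν → FinitePosOnBalls μ → IsDoubling μ cμ →
      PoincareIneq ν μ q (p - ε) K →
      MaxPoincareIneq ν μ q p C := by
  have hq0 : 0 < q := by linarith
  set p' := p - ε with hp'def
  have hp'1 : 1 < p' := by simp only [hp'def]; linarith
  have hp'0 : 0 < p' := by linarith
  have hppos : 0 < p := by linarith
  have hp'p : p' < p := by simp only [hp'def]; linarith
  set s := p / p' with hsdef
  have hs1 : 1 < s := (one_lt_div hp'0).2 hp'p
  have hs0 : 0 < s := by linarith
  have hcμ0 : 0 < cμ := by linarith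
  have hCpos : 0 < K ^ (p / p') * (2 * cμ ^ 3 * s / (s - 1)) * 2 ^ (s - 1) + 1 := by
    have h1 : (0:ℝ) ≤ K ^ (p / p') := Real.rpow_nonneg hK.le _
    have h2 : (0:ℝ) ≤ 2 * cμ ^ 3 * s / (s - 1) := div_nonneg (by positivity) (by linarith)
    have h3 : (0:ℝ) ≤ (2:ℝ) ^ (s - 1) := Real.rpow_nonneg (by norm_num) _
    nlinarith [mul_nonneg (mul_nonneg h1 h2) h3]
  refine ⟨K ^ (p / p') * (2 * cμ ^ 3 * s / (s - 1)) * 2 ^ (s - 1) + 1, hCpos, ?_⟩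
  intro X _ _ _ ν μ hν hμ hdo hPI
  intro x₀ r₀ hr₀ u hu g hg
  set B₀ := Metric.ball x₀ r₀ with hB₀
  set 𝓑 := {b : X × ℝ | 0 < b.2 ∧ Metric.ball b.1 (2 * b.2) ⊆ B₀} with h𝓑
  obtain ⟨hgmeas, ρ, hρmeas, hρfin, hρcurve⟩ := hg
  -- `g` is also a `(p-ε)`-weak upper gradient
  have hg' : IsWeakUpperGradient μ p' u g := by
    refine ⟨hgmeas, ρ, hρmeas, ?_, hρcurve⟩
    intro x r hr
    calc ∫⁻ y in Metric.ball x r, ρ y ^ p' ∂μ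
        ≤ ∫⁻ y in Metric.ball x r, (1 + ρ y ^ p) ∂μ := by
          apply lintegral_mono
          intro y
          rcases le_or_gt (ρ y) 1 with h1 | h1
          · exact (ENNReal.rpow_le_one h1 hp'0.le).trans le_self_add
          · exact (ENNReal.rpow_le_rpow_of_exponent_le h1.le hp'p.le).trans le_add_self
      _ = μ (Metric.ball x r) + ∫⁻ y in Metric.ball x r, ρ y ^ p ∂μ := by
          rw [lintegral_add_left measurable_const, setLIntegral_one]
      _ < ⊤ := ENNReal.add_lt_top.2 ⟨(hμ x r hr).2, hρfin x r hr⟩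
  set h : X → ℝ≥0∞ := B₀.indicator (fun y => g y ^ p') with hhdef
  have hhmeas : Measurable h := (hgmeas.pow_const p').indicator measurableSet_ball
  set T := rT μ 𝓑 h with hT
  -- Step A: pointwise bound on the sharp maximal function
  have hptwise : ∀ x, sharpMax ν q 𝓑 u x ≤ ENNReal.ofReal (K ^ (1/p')) * (T x) ^ (1/p') := by
    intro x
    simp only [sharpMax]
    apply iSup₂_le
    intro b hb
    apply iSup_le
    intro hxb
    obtain ⟨z, r⟩ := b
    simp only at hxb
    have hr : 0 < r := hb.1
    have hνB := hν z r hr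
    have hμB := hμ z r hr
    have hPI' := hPI z r hr u hu g hg'
    have hd0 : 0 ≤ Metric.diam (Metric.ball z r) := Metric.diam_nonneg
    rcases eq_or_lt_of_le hd0 with hdzero | hdpos
    · -- degenerate ball: the oscillation vanishes
      have hB1 : Metric.ball z r = {z} := by
        apply Set.Subset.antisymm
        · intro y hy
          have : dist y z ≤ Metric.diam (Metric.ball z r) :=
            Metric.dist_le_diam_of_mem Metric.isBounded_ball hy (Metric.mem_ball_self hr)
          rw [← hdzero] at this
          have : dist y z = 0 := le_antisymm this dist_nonneg
          simpa [dist_eq_zero] using this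
        · intro y hy
          simp only [Set.mem_singleton_iff] at hy
          subst hy
          exact Metric.mem_ball_self hr
      have havg : (⨍ w in Metric.ball z r, u w ∂ν) = u z := by
        rw [hB1, setAverage_eq]
        rw [show (∫ w in ({z} : Set X), u w ∂ν) = (ν {z}).toReal • u z by
          rw [← measureReal_def, ← setIntegral_const]
          exact setIntegral_congr_fun (measurableSet_singleton z)
            (fun y hy => by rw [Set.mem_singleton_iff] at hy; rw [hy])]
        rw [smul_smul, measureReal_def, inv_mul_cancel₀, one_smul]
        rw [← hB1]
        exact (ENNReal.toReal_pos hνB.1.ne' hνB.2.ne).ne'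
      have hIzero : (∫⁻ y in Metric.ball z r,
          ENNReal.ofReal |u y - ⨍ w in Metric.ball z r, u w ∂ν| ^ q ∂ν) = 0 := by
        rw [show (∫⁻ y in Metric.ball z r,
            ENNReal.ofReal |u y - ⨍ w in Metric.ball z r, u w ∂ν| ^ q ∂ν) =
            ∫⁻ _ in Metric.ball z r, 0 ∂ν from ?_, lintegral_zero]
        apply setLIntegral_congr_fun measurableSet_ball
        intro y hy
        rw [havg]
        rw [hB1] at hy
        rw [Set.mem_singleton_iff] at hy
        subst hy
        simp [ENNReal.zero_rpow_of_pos hq0]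
      simp only [ballOsc]
      rw [hIzero, ENNReal.zero_div, ENNReal.zero_rpow_of_pos (one_div_pos.mpr hq0)]
      exact zero_le
    · -- nondegenerate ball: use the Poincaré inequality
      set d := Metric.diam (Metric.ball z r) with hd
      set I := ∫⁻ y in Metric.ball z r,
        ENNReal.ofReal |u y - ⨍ w in Metric.ball z r, u w ∂ν| ^ q ∂ν with hI
      have hD0 : ENNReal.ofReal (d ^ q) ≠ 0 := by
        simp only [ne_eq, ENNReal.ofReal_eq_zero, not_le]
        positivity
      have hDtop : ENNReal.ofReal (d ^ q) ≠ ⊤ := ENNReal.ofReal_ne_top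
      have hkey : ballOsc ν q u z r =
          (ENNReal.ofReal d)⁻¹ * ((ν (Metric.ball z r))⁻¹ * I) ^ (1/q) := by
        simp only [ballOsc, ← hd, ← hI]
        rw [div_eq_mul_inv, ENNReal.mul_inv (Or.inl hD0) (Or.inl hDtop)]
        rw [show I * ((ENNReal.ofReal (d ^ q))⁻¹ * (ν (Metric.ball z r))⁻¹) =
          (ENNReal.ofReal (d ^ q))⁻¹ * ((ν (Metric.ball z r))⁻¹ * I) by ring]
        rw [ENNReal.mul_rpow_of_nonneg _ _ (one_div_pos.mpr hq0).le]
        congr 1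
        rw [ENNReal.inv_rpow]
        congr 1
        rw [ENNReal.ofReal_rpow_of_nonneg (by positivity : (0:ℝ) ≤ d ^ q)
          (one_div_pos.mpr hq0).le]
        congr 1
        rw [one_div, Real.rpow_rpow_inv hdpos.le hq0.ne']
      have hofd0 : ENNReal.ofReal d ≠ 0 := by
        simp only [ne_eq, ENNReal.ofReal_eq_zero, not_le]
        exact hdpos
      calc ballOsc ν q u z r
          = (ENNReal.ofReal d)⁻¹ * ((ν (Metric.ball z r))⁻¹ * I) ^ (1/q) := hkey
        _ ≤ (ENNReal.ofReal d)⁻¹ * (ENNReal.ofReal (K ^ (1/p') * d) *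
              ((μ (Metric.ball z r))⁻¹ *
                ∫⁻ y in Metric.ball z r, g y ^ p' ∂μ) ^ (1/p')) :=
            mul_le_mul_right hPI' _
        _ = ENNReal.ofReal (K ^ (1/p')) *
              ((μ (Metric.ball z r))⁻¹ *
                ∫⁻ y in Metric.ball z r, g y ^ p' ∂μ) ^ (1/p') := by
            rw [ENNReal.ofReal_mul (by positivity)]
            rw [show (ENNReal.ofReal d)⁻¹ * (ENNReal.ofReal (K ^ (1/p')) * ENNReal.ofReal d *
              ((μ (Metric.ball z r))⁻¹ *
                ∫⁻ y in Metric.ball z r, g y ^ p' ∂μ) ^ (1/p')) =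
              ENNReal.ofReal (K ^ (1/p')) * ((ENNReal.ofReal d)⁻¹ * ENNReal.ofReal d) *
              ((μ (Metric.ball z r))⁻¹ *
                ∫⁻ y in Metric.ball z r, g y ^ p' ∂μ) ^ (1/p') by ring]
            rw [ENNReal.inv_mul_cancel hofd0 ENNReal.ofReal_ne_top, mul_one]
        _ = ENNReal.ofReal (K ^ (1/p')) *
              ((μ (Metric.ball z r))⁻¹ *
                ∫⁻ y in Metric.ball z r, h y ∂μ) ^ (1/p') := by
            congr 3
            apply setLIntegral_congr_fun measurableSet_ball
            intro y hy
            have hyB₀ : y ∈ B₀ := hb.2 (Metric.ball_subset_ball (by linarith) hy)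
            rw [hhdef]
            simp [Set.indicator_of_mem hyB₀]
        _ ≤ ENNReal.ofReal (K ^ (1/p')) * (T x) ^ (1/p') :=
            mul_le_mul_right (ENNReal.rpow_le_rpow (le_rT hb hxb) (one_div_pos.mpr hp'0).le) _
    -- Step A': power version
  have hpt2 : ∀ x, (sharpMax ν q 𝓑 u x) ^ p ≤ ENNReal.ofReal (K ^ s) * T x ^ s := by
    intro x
    have hps : 1 / p' * p = s := by
      rw [hsdef, one_div, inv_mul_eq_div]
    calc (sharpMax ν q 𝓑 u x) ^ p
        ≤ (ENNReal.ofReal (K ^ (1/p')) * (T x) ^ (1/p')) ^ p :=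
          ENNReal.rpow_le_rpow (hptwise x) hppos.le
      _ = ENNReal.ofReal (K ^ s) * T x ^ s := by
          rw [ENNReal.mul_rpow_of_nonneg _ _ hppos.le, ← ENNReal.rpow_mul,
            ENNReal.ofReal_rpow_of_nonneg (Real.rpow_nonneg hK.le _) hppos.le,
            ← Real.rpow_mul hK.le, hps]
  haveI : IsFiniteMeasure (μ.restrict B₀) :=
    ⟨by rw [Measure.restrict_apply_univ]; exact (hμ x₀ r₀ hr₀).2⟩
  have hTmeas : Measurable T := rT_measurable μ 𝓑 h
  set tr : ℝ → X → ℝ≥0∞ := fun t x => if ENNReal.ofReal t < 2 * h x then h x else 0 with htr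
  have htrmeas : ∀ t, Measurable (tr t) := fun t =>
    Measurable.ite (measurableSet_lt measurable_const (hhmeas.const_mul 2)) hhmeas
      measurable_const
  -- weak-type bound for each level t
  have hweak : ∀ t : ℝ, 0 < t → (μ.restrict B₀) {x | ENNReal.ofReal t < T x} ≤
      ENNReal.ofReal cμ ^ 3 * (ENNReal.ofReal (t/2))⁻¹ * ∫⁻ x, tr t x ∂(μ.restrict B₀) := by
    intro t ht
    have ht2 : (0:ℝ) < t/2 := by linarith
    have ha0 : ENNReal.ofReal (t/2) ≠ 0 := by
      simp only [ne_eq, ENNReal.ofReal_eq_zero, not_le]; exact ht2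
    have hoft : ENNReal.ofReal t = ENNReal.ofReal (t/2) + ENNReal.ofReal (t/2) := by
      rw [← ENNReal.ofReal_add ht2.le ht2.le]; norm_num
    have hoft2 : ENNReal.ofReal t = 2 * ENNReal.ofReal (t/2) := by
      rw [hoft]; ring
    have hsubset : {x | ENNReal.ofReal t < T x} ⊆
        {x | ENNReal.ofReal (t/2) < rT μ 𝓑 (tr t) x} := by
      intro x hx
      simp only [Set.mem_setOf_eq] at hx ⊢
      by_contra hcon
      push_neg at hcon
      have hptw : ∀ y, h y ≤ tr t y + ENNReal.ofReal (t/2) := by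
        intro y
        by_cases hcase : ENNReal.ofReal t < 2 * h y
        · simp only [htr, if_pos hcase]
          exact le_self_add
        · have h2 : 2 * h y ≤ 2 * ENNReal.ofReal (t/2) := by
            rw [← hoft2]; exact not_lt.1 hcase
          have h3 : h y ≤ ENNReal.ofReal (t/2) :=
            (ENNReal.mul_le_mul_iff_right (by norm_num) (by norm_num)).1 h2
          exact le_add_left h3
      have hTle : T x ≤ ENNReal.ofReal (t/2) + ENNReal.ofReal (t/2) := by
        rw [hT]
        apply rT_le
        intro b hb hxb
        have hμB := hμ b.1 b.2 hb.1
        calc (μ (Metric.ball b.1 b.2))⁻¹ * ∫⁻ y in Metric.ball b.1 b.2, h y ∂μ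
            ≤ (μ (Metric.ball b.1 b.2))⁻¹ * (∫⁻ y in Metric.ball b.1 b.2, tr t y ∂μ +
                ENNReal.ofReal (t/2) * μ (Metric.ball b.1 b.2)) := by
              apply mul_le_mul_right
              calc ∫⁻ y in Metric.ball b.1 b.2, h y ∂μ
                  ≤ ∫⁻ y in Metric.ball b.1 b.2, (tr t y + ENNReal.ofReal (t/2)) ∂μ :=
                    lintegral_mono fun y => hptw y
                _ = ∫⁻ y in Metric.ball b.1 b.2, tr t y ∂μ +
                    ENNReal.ofReal (t/2) * μ (Metric.ball b.1 b.2) := by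
                    rw [lintegral_add_right _ measurable_const, setLIntegral_const]
          _ = (μ (Metric.ball b.1 b.2))⁻¹ * ∫⁻ y in Metric.ball b.1 b.2, tr t y ∂μ +
              ENNReal.ofReal (t/2) := by
              rw [mul_add, show (μ (Metric.ball b.1 b.2))⁻¹ *
                (ENNReal.ofReal (t/2) * μ (Metric.ball b.1 b.2)) =
                ENNReal.ofReal (t/2) *
                  ((μ (Metric.ball b.1 b.2))⁻¹ * μ (Metric.ball b.1 b.2)) by ring,
                ENNReal.inv_mul_cancel hμB.1.ne' hμB.2.ne, mul_one]
          _ ≤ rT μ 𝓑 (tr t) x + ENNReal.ofReal (t/2) :=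
              add_le_add (le_rT hb hxb) le_rfl
          _ ≤ ENNReal.ofReal (t/2) + ENNReal.ofReal (t/2) := by gcongr
      rw [← hoft] at hTle
      exact absurd hx (not_lt.2 hTle)
    have htreq : tr t = B₀.indicator (tr t) := by
      funext y
      rcases em (y ∈ B₀) with hy | hy
      · rw [Set.indicator_of_mem hy]
      · rw [Set.indicator_of_notMem hy]
        have hy0 : h y = 0 := by rw [hhdef]; exact Set.indicator_of_notMem hy _
        simp [htr, hy0]
    calc (μ.restrict B₀) {x | ENNReal.ofReal t < T x}
        ≤ μ {x | ENNReal.ofReal (t/2) < rT μ 𝓑 (tr t) x} :=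
          le_trans (Measure.restrict_apply_le _ _) (measure_mono hsubset)
      _ ≤ ENNReal.ofReal cμ ^ 3 * (ENNReal.ofReal (t/2))⁻¹ * ∫⁻ x, tr t x ∂μ :=
          weakType hμ hdo x₀ r₀ (tr t) ha0 ENNReal.ofReal_ne_top
      _ = ENNReal.ofReal cμ ^ 3 * (ENNReal.ofReal (t/2))⁻¹ *
            ∫⁻ x, tr t x ∂(μ.restrict B₀) := by
          congr 1
          conv_lhs => rw [htreq]
          rw [lintegral_indicator measurableSet_ball]
  -- Fubini step
  have hswap : (∫⁻ t in Set.Ioi (0:ℝ), ∫⁻ x, ENNReal.ofReal (2 * cμ^3 * s * t^(s-2)) *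
        tr t x ∂(μ.restrict B₀)) =
      ∫⁻ x, (∫⁻ t in Set.Ioi (0:ℝ), ENNReal.ofReal (2 * cμ^3 * s * t^(s-2)) * tr t x)
        ∂(μ.restrict B₀) := by
    have hmeas2 : AEMeasurable (Function.uncurry fun (x : X) (t : ℝ) =>
        ENNReal.ofReal (2 * cμ^3 * s * t^(s-2)) * tr t x)
        ((μ.restrict B₀).prod (volume.restrict (Set.Ioi (0:ℝ)))) := by
      have : (Function.uncurry fun (x : X) (t : ℝ) =>
          ENNReal.ofReal (2 * cμ^3 * s * t^(s-2)) * tr t x) =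
          fun pr : X × ℝ => ENNReal.ofReal (2 * cμ^3 * s * pr.2^(s-2)) *
            (if ENNReal.ofReal pr.2 < 2 * h pr.1 then h pr.1 else 0) := by
        ext pr
        simp [Function.uncurry, htr]
      rw [this]
      exact (Measurable.mul
        (((measurable_snd.pow_const (s-2)).const_mul _).ennreal_ofReal)
        (Measurable.ite
          (measurableSet_lt measurable_snd.ennreal_ofReal
            ((hhmeas.const_mul 2).comp measurable_fst))
          (hhmeas.comp measurable_fst) measurable_const)).aemeasurable
    exact (lintegral_lintegral_swap hmeas2).symm
  -- inner integral evaluation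
  have hinner : ∀ x, (∫⁻ t in Set.Ioi (0:ℝ),
      ENNReal.ofReal (2 * cμ^3 * s * t^(s-2)) * tr t x) ≤
      ENNReal.ofReal (2 * cμ^3 * s / (s-1)) * 2^(s-1) * h x ^ s := by
    intro x
    have hrw : ∀ t : ℝ, ENNReal.ofReal (2 * cμ^3 * s * t^(s-2)) * tr t x =
        ({t : ℝ | ENNReal.ofReal t < 2 * h x}.indicator
          (fun t => ENNReal.ofReal (2 * cμ^3 * s * t^(s-2))) t) * h x := by
      intro t
      simp only [htr, Set.indicator_apply, Set.mem_setOf_eq]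
      by_cases hc : ENNReal.ofReal t < 2 * h x
      · rw [if_pos hc, if_pos hc]
      · rw [if_neg hc, if_neg hc, mul_zero, zero_mul]
    calc (∫⁻ t in Set.Ioi (0:ℝ), ENNReal.ofReal (2 * cμ^3 * s * t^(s-2)) * tr t x)
        = (∫⁻ t in Set.Ioi (0:ℝ), ({t : ℝ | ENNReal.ofReal t < 2 * h x}.indicator
            (fun t => ENNReal.ofReal (2 * cμ^3 * s * t^(s-2))) t)) * h x := by
          simp_rw [hrw]
          exact lintegral_mul_const'' _ (by
            apply Measurable.aemeasurable
            apply Measurable.indicator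
            · exact (Measurable.ennreal_ofReal ((measurable_id'.pow_const (s-2)).const_mul _))
            · exact measurableSet_lt measurable_id'.ennreal_ofReal measurable_const)
      _ = ENNReal.ofReal (2 * cμ^3 * s / (s-1)) * (2 * h x)^(s-1) * h x := by
          rw [lintTrunc (by linarith : (-1:ℝ) < s-2) (by positivity) (2 * h x)]
          rw [show s - 2 + 1 = s - 1 by ring]
      _ ≤ ENNReal.ofReal (2 * cμ^3 * s / (s-1)) * 2^(s-1) * h x ^ s := by
          have hxx : h x ^ (s-1) * h x = h x ^ s := by
            nth_rewrite 2 [← ENNReal.rpow_one (h x)]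
            rw [← ENNReal.rpow_add_of_nonneg _ _ (by linarith) zero_le_one,
              show s - 1 + 1 = s by ring]
          rw [ENNReal.mul_rpow_of_nonneg _ _ (by linarith : (0:ℝ) ≤ s-1), mul_assoc,
            mul_assoc, mul_assoc, hxx, ← mul_assoc]
  -- constant bookkeeping
  have hconst : ENNReal.ofReal (K ^ s) * (ENNReal.ofReal (2 * cμ^3 * s / (s-1)) * 2^(s-1)) ≤
      ENNReal.ofReal (K ^ (p / p') * (2 * cμ ^ 3 * s / (s - 1)) * 2 ^ (s - 1) + 1) := by
    rw [show ((2:ℝ≥0∞))^(s-1) = ENNReal.ofReal (2^(s-1)) by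
      rw [show ((2:ℝ≥0∞)) = ENNReal.ofReal 2 by norm_num,
        ENNReal.ofReal_rpow_of_nonneg (by norm_num) (by linarith)]]
    rw [← ENNReal.ofReal_mul (div_nonneg (by positivity) (by linarith : (0:ℝ) ≤ s - 1)),
      ← ENNReal.ofReal_mul (Real.rpow_nonneg hK.le _)]
    apply ENNReal.ofReal_le_ofReal
    rw [← hsdef]
    nlinarith [mul_nonneg (mul_nonneg (Real.rpow_nonneg hK.le s)
      (div_nonneg (by positivity : (0:ℝ) ≤ 2 * cμ^3 * s) (by linarith : (0:ℝ) ≤ s - 1)))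
      (Real.rpow_nonneg (by norm_num : (0:ℝ) ≤ 2) (s-1))]
  have hfinconst : ENNReal.ofReal (2 * cμ^3 * s / (s-1)) * (2:ℝ≥0∞)^(s-1) ≠ ⊤ :=
    ENNReal.mul_ne_top ENNReal.ofReal_ne_top
      (ENNReal.rpow_ne_top_of_nonneg (by linarith) (by norm_num))
  -- final chain
  calc ∫⁻ x in B₀, (sharpMax ν q 𝓑 u x) ^ p ∂μ
      ≤ ∫⁻ x in B₀, ENNReal.ofReal (K ^ s) * T x ^ s ∂μ := lintegral_mono fun x => hpt2 x
    _ = ENNReal.ofReal (K ^ s) * ∫⁻ x, T x ^ s ∂(μ.restrict B₀) :=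
        lintegral_const_mul' _ _ ENNReal.ofReal_ne_top
    _ = ENNReal.ofReal (K ^ s) * ∫⁻ t in Set.Ioi (0:ℝ),
          ENNReal.ofReal (s * t^(s-1)) * (μ.restrict B₀) {x | ENNReal.ofReal t < T x} := by
        rw [layercake (μ.restrict B₀) hTmeas hs0]
    _ ≤ ENNReal.ofReal (K ^ s) * ∫⁻ t in Set.Ioi (0:ℝ),
          ∫⁻ x, ENNReal.ofReal (2 * cμ^3 * s * t^(s-2)) * tr t x ∂(μ.restrict B₀) := by
        apply mul_le_mul_right
        apply lintegral_mono_ae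
        filter_upwards [self_mem_ae_restrict (measurableSet_Ioi : MeasurableSet (Set.Ioi (0:ℝ)))]
          with t ht
        rw [Set.mem_Ioi] at ht
        calc ENNReal.ofReal (s * t^(s-1)) * (μ.restrict B₀) {x | ENNReal.ofReal t < T x}
            ≤ ENNReal.ofReal (s * t^(s-1)) * (ENNReal.ofReal cμ ^ 3 *
                (ENNReal.ofReal (t/2))⁻¹ * ∫⁻ x, tr t x ∂(μ.restrict B₀)) :=
              mul_le_mul_right (hweak t ht) _
          _ = ENNReal.ofReal (2 * cμ^3 * s * t^(s-2)) *
                ∫⁻ x, tr t x ∂(μ.restrict B₀) := by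
              rw [← mul_assoc]
              congr 1
              rw [← ENNReal.ofReal_inv_of_pos (by linarith : (0:ℝ) < t/2),
                ← ENNReal.ofReal_pow hcμ0.le 3, ← mul_assoc,
                ← ENNReal.ofReal_mul (mul_nonneg hs0.le (Real.rpow_nonneg ht.le _)),
                ← ENNReal.ofReal_mul (mul_nonneg
                  (mul_nonneg hs0.le (Real.rpow_nonneg ht.le _)) (by positivity))]
              congr 1
              rw [show s - 2 = s - 1 + (-1) by ring, Real.rpow_add ht, Real.rpow_neg_one,
                inv_div]
              ring
          _ = ∫⁻ x, ENNReal.ofReal (2 * cμ^3 * s * t^(s-2)) * tr t x ∂(μ.restrict B₀) :=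
              (lintegral_const_mul' _ _ ENNReal.ofReal_ne_top).symm
    _ = ENNReal.ofReal (K ^ s) * ∫⁻ x, (∫⁻ t in Set.Ioi (0:ℝ),
          ENNReal.ofReal (2 * cμ^3 * s * t^(s-2)) * tr t x) ∂(μ.restrict B₀) := by
        rw [hswap]
    _ ≤ ENNReal.ofReal (K ^ s) * ∫⁻ x, ENNReal.ofReal (2 * cμ^3 * s / (s-1)) * 2^(s-1) *
          h x ^ s ∂(μ.restrict B₀) :=
        mul_le_mul_right (lintegral_mono fun x => hinner x) _
    _ = ENNReal.ofReal (K ^ s) * (ENNReal.ofReal (2 * cμ^3 * s / (s-1)) * 2^(s-1)) *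
          ∫⁻ x, h x ^ s ∂(μ.restrict B₀) := by
        rw [lintegral_const_mul'
          (ENNReal.ofReal (2 * cμ^3 * s / (s-1)) * (2:ℝ≥0∞)^(s-1)) _ hfinconst, ← mul_assoc]
    _ = ENNReal.ofReal (K ^ s) * (ENNReal.ofReal (2 * cμ^3 * s / (s-1)) * 2^(s-1)) *
          ∫⁻ x in B₀, g x ^ p ∂μ := by
        congr 1
        apply setLIntegral_congr_fun measurableSet_ball
        intro x hx
        rw [hhdef]
        simp only [Set.indicator_of_mem (show x ∈ B₀ from hx)]
        rw [← ENNReal.rpow_mul, show p' * s = p by rw [hsdef, mul_comm, div_mul_cancel₀ p hp'0.ne']]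
    _ ≤ ENNReal.ofReal (K ^ (p / p') * (2 * cμ ^ 3 * s / (s - 1)) * 2 ^ (s - 1) + 1) *
          ∫⁻ x in B₀, g x ^ p ∂μ := mul_le_mul_left hconst _
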